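/- Let u : [0,T] → U be an N-admissible control with associated trajectory z = (z_1,…,z_N). Define the occupation measure μ_N as the pushforward of Lebesgue measure on [0,T] under the map t ↦ (t, z(t), u(t)), and the terminal measure μ_N^T := δ_{z(T)}. Then (μ_N, μ_N^T) is feasible for the linear program P_N: μ_N is a nonnegative Borel measure supported in [0,T] × Z_1 × ⋯ × Z_N × U, μ_N^T is a nonnegative Borel measure supported in Z_1^T × ⋯ × Z_N^T, the Liouville constraint ∫ g(T, y) dμ_N^T(y) − g(0, z^0) = ∫ [∂g/∂t + Σ_{k=1}^N (λ_k z_k + b_k(u)) ∂g/∂z_k] dμ_N holds for every continuously differentiable g : ℝ × ℝ^N → ℝ, and moreover ∫ h dμ_N = ∫_0^T h(t, u(t)) dt. Consequently, the LP optimal value P_N := inf { ∫ h dμ : (μ, μ^T) feasible } satisfies P_N ≤ J_N(0,T,z^0). -/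

import Mathlib

open MeasureTheory

noncomputable section

/-- A bounded measurable control `u : [0,T] → U` is `N`-admissible if there exist
absolutely continuous mode trajectories `z_1, …, z_N` (encoded via the integral form,
which encodes absolute continuity together with the a.e. mode ODE
`z_k' = λ_k z_k + b_k(u)`), with `z_k(0) = z_k^0`, `z_k(t) ∈ Z_k` on `[0,T]` and
`z_k(T) ∈ Z_k^T`. -/
def IsAdmissible (T : ℝ) {m : ℕ} (U : Set (Fin m → ℝ)) (lam : ℕ → ℝ)
    (b : ℕ → (Fin m → ℝ) →ₗ[ℝ] ℝ) (Z ZT : ℕ → Set ℝ) (z0 : ℕ → ℝ)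
    (N : ℕ) (u : ℝ → Fin m → ℝ) : Prop :=
  Measurable u ∧ (∀ t ∈ Set.Icc (0:ℝ) T, u t ∈ U) ∧
  ∀ k, 1 ≤ k → k ≤ N →
    ∃ z : ℝ → ℝ, z 0 = z0 k ∧
      IntervalIntegrable (fun s => lam k * z s + b k (u s)) volume 0 T ∧
      (∀ t ∈ Set.Icc (0:ℝ) T, z t = z0 k + ∫ s in (0:ℝ)..t, (lam k * z s + b k (u s))) ∧
      (∀ t ∈ Set.Icc (0:ℝ) T, z t ∈ Z k) ∧ z T ∈ ZT k

/-- The operator `𝓛_N g = ∂g/∂t + Σ_{k=1}^N f_k ∂g/∂z_k`, with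
`f_k(t,z,u) = λ_k z_k + b_k(u)`, evaluated at a point `p = (t, z, u)`. -/
def Lop {N m : ℕ} (lam : ℕ → ℝ) (b : ℕ → (Fin m → ℝ) →ₗ[ℝ] ℝ)
    (g : ℝ × (Fin N → ℝ) → ℝ) (p : ℝ × (Fin N → ℝ) × (Fin m → ℝ)) : ℝ :=
  fderiv ℝ g (p.1, p.2.1) (1, (0 : Fin N → ℝ)) +
    ∑ k : Fin N, (lam (k.1 + 1) * p.2.1 k + b (k.1 + 1) p.2.2) *
      fderiv ℝ g (p.1, p.2.1) ((0 : ℝ), Pi.single k (1 : ℝ))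

/-- Feasibility for the linear program `P_N`: `μ` is a (finite) nonnegative Borel
measure supported in `[0,T] × Z_1 × ⋯ × Z_N × U`, `μT` is a (finite) nonnegative
Borel measure supported in `Z_1^T × ⋯ × Z_N^T`, and the Liouville constraint
`∫ g(T,·) dμT − g(0,z⁰) = ∫ 𝓛_N g dμ` holds for every `C¹` test function `g`. -/
def LPFeasible (T : ℝ) {N m : ℕ} (U : Set (Fin m → ℝ)) (lam : ℕ → ℝ)
    (b : ℕ → (Fin m → ℝ) →ₗ[ℝ] ℝ) (Z ZT : ℕ → Set ℝ) (z0 : ℕ → ℝ)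
    (μ : Measure (ℝ × (Fin N → ℝ) × (Fin m → ℝ))) (μT : Measure (Fin N → ℝ)) : Prop :=
  IsFiniteMeasure μ ∧ IsFiniteMeasure μT ∧
  μ {p | ¬ (p.1 ∈ Set.Icc (0:ℝ) T ∧ (∀ k : Fin N, p.2.1 k ∈ Z (k.1 + 1)) ∧ p.2.2 ∈ U)} = 0 ∧
  μT {y | ¬ ∀ k : Fin N, y k ∈ ZT (k.1 + 1)} = 0 ∧
  ∀ g : ℝ × (Fin N → ℝ) → ℝ, ContDiff ℝ 1 g →
    (∫ y, g (T, y) ∂μT) - g (0, fun k : Fin N => z0 (k.1 + 1)) = ∫ p, Lop lam b g p ∂μ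

lemma pi_sum_single {N : ℕ} (y : Fin N → ℝ) :
    y = ∑ k : Fin N, y k • (Pi.single k 1 : Fin N → ℝ) := by
  nth_rewrite 1 [← Finset.univ_sum_single y]
  congr 1
  ext k j
  simp [Pi.single_apply, mul_comm]

lemma lin_decomp {N : ℕ} (A : (ℝ × (Fin N → ℝ)) →L[ℝ] ℝ) (y : Fin N → ℝ) :
    A (1, y) = A (1, 0) + ∑ k : Fin N, y k * A ((0:ℝ), Pi.single k (1:ℝ)) := by
  have hy : ((0:ℝ), y) = ∑ k : Fin N, y k • (((0:ℝ), Pi.single k (1:ℝ)) : ℝ × (Fin N → ℝ)) := by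
    refine Prod.ext ?_ ?_
    · simp [Prod.fst_sum]
    · simp only [Prod.snd_sum, Prod.smul_snd]
      rw [← Finset.univ_sum_single y]
      congr 1
      ext k j
      simp [Pi.single_apply, mul_comm]
  have h1 : ((1:ℝ), y) = ((1:ℝ), (0 : Fin N → ℝ)) + ((0:ℝ), y) := by simp
  rw [h1, map_add, hy, map_sum]
  simp only [_root_.map_smul, smul_eq_mul]

private lemma aux_frac (a e : ℝ) (ha : 0 ≤ a) (he : 0 < e) :
    2*a*(e/(2*(3*a+1))) ≤ e/2 := by
  rw [mul_div_assoc', div_le_div_iff₀ (by linarith) two_pos]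
  nlinarith

private lemma aux_half (t f e : ℝ) (h : (0:ℝ) < t+f+1) :
    (e/(2*(t+f+1))) * (t+f+1) = e/2 := by
  field_simp

lemma ftc_key {N : ℕ} {T : ℝ} (hT : 0 ≤ T) (v : ℝ → Fin N → ℝ)
    (hv : IntegrableOn v (Set.Ioc 0 T) volume)
    (w : ℝ → Fin N → ℝ)
    (hw : ∀ t ∈ Set.Icc (0:ℝ) T, w t = w 0 + ∫ s in (0:ℝ)..t, v s)
    (g : ℝ × (Fin N → ℝ) → ℝ) (hg : ContDiff ℝ 1 g) :
    g (T, w T) - g (0, w 0) =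
      ∫ t in (0:ℝ)..T, fderiv ℝ g (t, w t) (1, v t) := by
  have hgd : Differentiable ℝ g := hg.differentiable one_ne_zero
  have hAc : Continuous (fderiv ℝ g) := hg.continuous_fderiv one_ne_zero
  have huIcc : Set.uIcc (0:ℝ) T = Set.Icc 0 T := Set.uIcc_of_le hT
  have hprim : ContinuousOn (fun t => ∫ s in (0:ℝ)..t, v s) (Set.Icc 0 T) := by
    have h1 : IntegrableOn v (Set.uIcc 0 T) volume := by
      rw [huIcc, integrableOn_Icc_iff_integrableOn_Ioc]; exact hv
    simpa [huIcc] using intervalIntegral.continuousOn_primitive_interval h1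
  have hwc : ContinuousOn w (Set.Icc 0 T) := by
    have h1 : ContinuousOn (fun t => w 0 + ∫ s in (0:ℝ)..t, v s) (Set.Icc 0 T) :=
      continuousOn_const.add hprim
    exact h1.congr fun t ht => hw t ht
  set S : Set (Fin N → ℝ) := w '' Set.Icc 0 T with hS
  have hScompact : IsCompact S := isCompact_Icc.image_of_continuousOn hwc
  set K : Set (ℝ × (Fin N → ℝ)) := Set.Icc 0 T ×ˢ Metric.cthickening 1 S with hKdef
  have hK : IsCompact K := isCompact_Icc.prod hScompact.cthickening
  obtain ⟨M, hM⟩ := hK.exists_bound_of_continuousOn hAc.continuousOn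
  set M0 := max M 0 with hM0def
  have hM0 : 0 ≤ M0 := le_max_right _ _
  have hM' : ∀ p ∈ K, ‖fderiv ℝ g p‖ ≤ M0 := fun p hp => le_trans (hM p hp) (le_max_left _ _)
  set F := ∫ t in Set.Ioc (0:ℝ) T, ‖v t‖ with hFdef
  have hF : 0 ≤ F := integral_nonneg fun t => norm_nonneg _
  set D := fun t => fderiv ℝ g (t, w t) (1, v t) with hDdef
  have hmemK : ∀ t ∈ Set.Icc (0:ℝ) T, ((t, w t) : ℝ × (Fin N → ℝ)) ∈ K := by
    intro t ht
    exact ⟨ht, Metric.self_subset_cthickening _ ⟨t, ht, rfl⟩⟩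
  -- measurability / integrability of D
  have hBm : AEStronglyMeasurable (fun t => fderiv ℝ g (t, w t))
      (volume.restrict (Set.Ioc 0 T)) := by
    have h1 : ContinuousOn (fun t => fderiv ℝ g (t, w t)) (Set.Icc 0 T) :=
      hAc.comp_continuousOn (continuousOn_id.prodMk hwc)
    exact (h1.aestronglyMeasurable measurableSet_Icc).mono_measure
      (Measure.restrict_mono Set.Ioc_subset_Icc_self le_rfl)
  have hDm : AEStronglyMeasurable D (volume.restrict (Set.Ioc 0 T)) := by
    have h2 : AEStronglyMeasurable (fun t => (((1:ℝ), v t) : ℝ × (Fin N → ℝ)))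
        (volume.restrict (Set.Ioc 0 T)) :=
      aestronglyMeasurable_const.prodMk hv.aestronglyMeasurable
    exact isBoundedBilinearMap_apply.continuous.comp_aestronglyMeasurable (hBm.prodMk h2)
  have hnorm1 : ∀ y : Fin N → ℝ, ‖(((1:ℝ), y) : ℝ × (Fin N → ℝ))‖ ≤ 1 + ‖y‖ := by
    intro y
    rw [Prod.norm_def]
    refine max_le ?_ (by linarith [norm_nonneg y])
    rw [norm_one]
    linarith [norm_nonneg y]
  have hnorm0 : ∀ y : Fin N → ℝ, ‖(((0:ℝ), y) : ℝ × (Fin N → ℝ))‖ = ‖y‖ := by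
    intro y
    rw [Prod.norm_def]
    simp [max_eq_right (norm_nonneg y)]
  have hDnorm : ∀ t ∈ Set.Ioc (0:ℝ) T, ‖D t‖ ≤ M0 * (1 + ‖v t‖) := by
    intro t ht
    have h1 : ‖fderiv ℝ g (t, w t)‖ ≤ M0 := hM' _ (hmemK t (Set.Ioc_subset_Icc_self ht))
    calc ‖D t‖ ≤ ‖fderiv ℝ g (t, w t)‖ * ‖(((1:ℝ), v t) : ℝ × (Fin N → ℝ))‖ :=
          ContinuousLinearMap.le_opNorm _ _
      _ ≤ M0 * (1 + ‖v t‖) :=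
          mul_le_mul h1 (hnorm1 _) (norm_nonneg _) hM0
  have hDint : IntegrableOn D (Set.Ioc 0 T) := by
    have hbound : IntegrableOn (fun t => M0 * (1 + ‖v t‖)) (Set.Ioc 0 T) :=
      (((integrableOn_const (C := (1:ℝ)) measure_Ioc_lt_top.ne).add hv.norm).const_mul M0)
    refine hbound.mono' hDm ?_
    exact (ae_restrict_iff' measurableSet_Ioc).2 (Filter.Eventually.of_forall hDnorm)
  rw [intervalIntegral.integral_of_le hT]
  set X := g (T, w T) - g (0, w 0) - ∫ t in Set.Ioc (0:ℝ) T, D t with hXdef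
  suffices hsuff : ∀ ε > (0:ℝ), |X| ≤ ε by
    have : |X| ≤ 0 := by
      by_contra hne
      push_neg at hne
      linarith [hsuff (|X|/2) (by linarith)]
    have : X = 0 := abs_eq_zero.1 (le_antisymm this (abs_nonneg _))
    rw [hXdef] at this; linarith
  intro ε hε
  set ε' := ε / (2 * (T + F + 1)) with hε'def
  have hTF : (0:ℝ) < T + F + 1 := by linarith
  have hε' : 0 < ε' := div_pos hε (by linarith)
  obtain ⟨δ, hδ0, hδ⟩ := Metric.uniformContinuousOn_iff.1
    (hK.uniformContinuousOn_of_continuous hAc.continuousOn) ε' hε'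
  set η := min 1 (min (δ/2) (ε / (2 * (3*M0+1)))) with hηdef
  have hη0 : 0 < η := lt_min one_pos (lt_min (by linarith) (div_pos hε (by nlinarith)))
  have hη1 : η ≤ 1 := min_le_left _ _
  have hηδ : η < δ := lt_of_le_of_lt (le_trans (min_le_right _ _) (min_le_left _ _)) (by linarith)
  have hηε : η ≤ ε / (2*(3*M0+1)) := le_trans (min_le_right _ _) (min_le_right _ _)
  -- continuous approximation of v
  have hvind : Integrable ((Set.Ioc (0:ℝ) T).indicator v) volume :=
    (integrable_indicator_iff measurableSet_Ioc).2 hv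
  obtain ⟨vc, hvcsupp, hvcclose, hvccont, hvcint⟩ :=
    hvind.exists_hasCompactSupport_integral_sub_le hη0
  have hvcv : IntegrableOn (fun t => vc t - v t) (Set.Ioc 0 T) := hvcint.integrableOn.sub hv
  have hclose : ∫ t in Set.Ioc (0:ℝ) T, ‖vc t - v t‖ ≤ η := by
    have h1 : ∫ t in Set.Ioc (0:ℝ) T, ‖vc t - v t‖
        = ∫ t in Set.Ioc (0:ℝ) T, ‖(Set.Ioc (0:ℝ) T).indicator v t - vc t‖ := by
      refine setIntegral_congr_fun measurableSet_Ioc fun t ht => ?_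
      rw [Set.indicator_of_mem ht, norm_sub_rev]
    rw [h1]
    refine le_trans (setIntegral_le_integral ((hvind.sub hvcint).norm) ?_) hvcclose
    exact Filter.Eventually.of_forall fun t => norm_nonneg _
  set zc := fun t => w 0 + ∫ s in (0:ℝ)..t, vc s with hzcdef
  have hzcderiv : ∀ t, HasDerivAt zc (vc t) t := by
    intro t
    have h1 : HasDerivAt (fun r => ∫ s in (0:ℝ)..r, vc s) (vc t) t := by
      refine (intervalIntegral.integral_hasStrictDerivAt_right
        hvcint.intervalIntegrable ?_ hvccont.continuousAt).hasDerivAt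
      exact hvccont.stronglyMeasurable.stronglyMeasurableAtFilter
    exact h1.const_add (w 0)
  have hzccont : Continuous zc := continuous_iff_continuousAt.2 fun t => (hzcderiv t).continuousAt
  have hzcclose : ∀ t ∈ Set.Icc (0:ℝ) T, ‖zc t - w t‖ ≤ η := by
    intro t ht
    rw [hw t ht]
    have h0t : (0:ℝ) ≤ t := ht.1
    have heq : zc t - (w 0 + ∫ s in (0:ℝ)..t, v s) = ∫ s in Set.Ioc (0:ℝ) t, (vc s - v s) := by
      rw [integral_sub hvcint.integrableOn (hv.mono_set (Set.Ioc_subset_Ioc_right ht.2))]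
      show (w 0 + ∫ s in (0:ℝ)..t, vc s) - (w 0 + ∫ s in (0:ℝ)..t, v s) = _
      rw [intervalIntegral.integral_of_le h0t, intervalIntegral.integral_of_le h0t]
      abel
    rw [heq]
    refine le_trans (norm_integral_le_integral_norm _) (le_trans ?_ hclose)
    refine setIntegral_mono_set hvcv.norm ?_ ?_
    · exact Filter.Eventually.of_forall fun _ => norm_nonneg _
    · exact HasSubset.Subset.eventuallyLE (Set.Ioc_subset_Ioc_right ht.2)
  have hzcK : ∀ t ∈ Set.Icc (0:ℝ) T, ((t, zc t) : ℝ × (Fin N → ℝ)) ∈ K := by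
    intro t ht
    refine ⟨ht, Metric.closedBall_subset_cthickening (Set.mem_image_of_mem w ht) 1 ?_⟩
    rw [Metric.mem_closedBall, dist_eq_norm]
    exact le_trans (hzcclose t ht) hη1
  set Dc := fun t => fderiv ℝ g (t, zc t) (1, vc t) with hDcdef
  have hPhic : ∀ t, HasDerivAt (fun r => g (r, zc r)) (Dc t) t := fun t =>
    (hgd (t, zc t)).hasFDerivAt.comp_hasDerivAt t ((hasDerivAt_id t).prodMk (hzcderiv t))
  have hDccont : Continuous Dc := by
    have h1 : Continuous fun t => fderiv ℝ g (t, zc t) := hAc.comp (continuous_id.prodMk hzccont)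
    have h2 : Continuous fun t => (((1:ℝ), vc t) : ℝ × (Fin N → ℝ)) :=
      continuous_const.prodMk hvccont
    exact isBoundedBilinearMap_apply.continuous.comp (h1.prodMk h2)
  have hFTC : ∫ t in (0:ℝ)..T, Dc t = g (T, zc T) - g (0, zc 0) :=
    intervalIntegral.integral_eq_sub_of_hasDerivAt (fun t _ => hPhic t)
      (hDccont.intervalIntegrable 0 T)
  have hzc0 : zc 0 = w 0 := by simp [hzcdef]
  -- endpoint estimate
  have hend : ‖g (T, w T) - g (T, zc T)‖ ≤ M0 * η := by
    set s : Set (ℝ × (Fin N → ℝ)) := Set.Icc T T ×ˢ Metric.closedBall (w T) 1 with hsdef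
    have hTmemIcc : T ∈ Set.Icc (0:ℝ) T := ⟨hT, le_refl T⟩
    have hconv : Convex ℝ s := (convex_Icc T T).prod (convex_closedBall _ _)
    have hsub : s ⊆ K := by
      refine Set.prod_mono ?_ (Metric.closedBall_subset_cthickening (Set.mem_image_of_mem w hTmemIcc) 1)
      rw [Set.Icc_self]
      exact Set.singleton_subset_iff.2 hTmemIcc
    have hp1 : ((T, w T) : ℝ × (Fin N → ℝ)) ∈ s :=
      ⟨⟨le_refl T, le_refl T⟩, Metric.mem_closedBall_self zero_le_one⟩
    have hp2 : ((T, zc T) : ℝ × (Fin N → ℝ)) ∈ s := by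
      refine ⟨⟨le_refl T, le_refl T⟩, ?_⟩
      rw [Metric.mem_closedBall, dist_eq_norm]
      exact le_trans (hzcclose T hTmemIcc) hη1
    have hmvt := hconv.norm_image_sub_le_of_norm_fderiv_le
      (fun x _ => hgd x) (fun x hx => hM' x (hsub hx)) hp2 hp1
    refine le_trans hmvt ?_
    have : ((T, w T) : ℝ × (Fin N → ℝ)) - (T, zc T) = ((0:ℝ), w T - zc T) := by
      simp [Prod.mk_sub_mk]
    rw [this, hnorm0]
    refine mul_le_mul_of_nonneg_left ?_ hM0
    rw [norm_sub_rev]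
    exact hzcclose T hTmemIcc
  -- pointwise estimate on the difference of integrands
  have hdiff : ∀ t ∈ Set.Ioc (0:ℝ) T, ‖Dc t - D t‖ ≤ ε' * (1 + ‖vc t‖) + M0 * ‖vc t - v t‖ := by
    intro t ht
    have htI : t ∈ Set.Icc (0:ℝ) T := Set.Ioc_subset_Icc_self ht
    have hAdiff : ‖fderiv ℝ g (t, zc t) - fderiv ℝ g (t, w t)‖ ≤ ε' := by
      have hdist : dist ((t, zc t) : ℝ × (Fin N → ℝ)) (t, w t) < δ := by
        rw [Prod.dist_eq]
        simp only [dist_self]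
        have h2 : dist (zc t) (w t) ≤ η := by
          rw [dist_eq_norm]; exact hzcclose t htI
        exact max_lt hδ0 (lt_of_le_of_lt h2 hηδ)
      have := hδ _ (hzcK t htI) _ (hmemK t htI) hdist
      rw [dist_eq_norm] at this
      exact le_of_lt this
    have hsplit : Dc t - D t = (fderiv ℝ g (t, zc t) - fderiv ℝ g (t, w t)) (1, vc t)
        + fderiv ℝ g (t, w t) (((1:ℝ), vc t) - ((1:ℝ), v t)) := by
      simp only [ContinuousLinearMap.sub_apply, map_sub]
      ring
    rw [hsplit]
    refine le_trans (norm_add_le _ _) (add_le_add ?_ ?_)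
    · refine le_trans (ContinuousLinearMap.le_opNorm _ _) ?_
      exact mul_le_mul hAdiff (hnorm1 _) (norm_nonneg _) hε'.le
    · refine le_trans (ContinuousLinearMap.le_opNorm _ _) ?_
      have h1 : (((1:ℝ), vc t) : ℝ × (Fin N → ℝ)) - ((1:ℝ), v t) = ((0:ℝ), vc t - v t) := by
        simp [Prod.mk_sub_mk]
      rw [h1, hnorm0]
      exact mul_le_mul (hM' _ (hmemK t htI)) (le_refl _) (norm_nonneg _) hM0
  have hDcint : IntegrableOn Dc (Set.Ioc 0 T) := hDccont.integrableOn_Ioc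
  have hsub2 : (∫ t in Set.Ioc (0:ℝ) T, Dc t) - ∫ t in Set.Ioc (0:ℝ) T, D t
      = ∫ t in Set.Ioc (0:ℝ) T, (Dc t - D t) := (integral_sub hDcint hDint).symm
  have hconst : IntegrableOn (fun _ : ℝ => (1:ℝ)) (Set.Ioc 0 T) :=
    integrableOn_const measure_Ioc_lt_top.ne
  have hi1 : IntegrableOn (fun t : ℝ => 1 + ‖vc t‖) (Set.Ioc 0 T) :=
    hconst.add hvcint.integrableOn.norm
  have hi2 : IntegrableOn (fun t : ℝ => ε' * (1 + ‖vc t‖)) (Set.Ioc 0 T) := hi1.const_mul ε'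
  have hi3 : IntegrableOn (fun t : ℝ => M0 * ‖vc t - v t‖) (Set.Ioc 0 T) :=
    hvcv.norm.const_mul M0
  have hi4 : IntegrableOn (fun t : ℝ => ‖v t‖ + ‖vc t - v t‖) (Set.Ioc 0 T) :=
    hv.norm.add hvcv.norm
  have hIbound : |∫ t in Set.Ioc (0:ℝ) T, (Dc t - D t)| ≤ ε' * (T + F + 1) + M0 * η := by
    have h1 : |∫ t in Set.Ioc (0:ℝ) T, (Dc t - D t)| ≤ ∫ t in Set.Ioc (0:ℝ) T, ‖Dc t - D t‖ := by
      simpa [Real.norm_eq_abs] using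
        norm_integral_le_integral_norm (μ := volume.restrict (Set.Ioc 0 T))
          (fun t => Dc t - D t)
    have hrhsint : IntegrableOn
        (fun t => ε' * (1 + ‖vc t‖) + M0 * ‖vc t - v t‖) (Set.Ioc 0 T) :=
      hi2.add hi3
    have h2 : ∫ t in Set.Ioc (0:ℝ) T, ‖Dc t - D t‖
        ≤ ∫ t in Set.Ioc (0:ℝ) T, (ε' * (1 + ‖vc t‖) + M0 * ‖vc t - v t‖) :=
      setIntegral_mono_on (hDcint.sub hDint).norm hrhsint measurableSet_Ioc hdiff
    have h3 : ∫ t in Set.Ioc (0:ℝ) T, (ε' * (1 + ‖vc t‖) + M0 * ‖vc t - v t‖)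
        = ε' * (∫ t in Set.Ioc (0:ℝ) T, (1 + ‖vc t‖))
          + M0 * ∫ t in Set.Ioc (0:ℝ) T, ‖vc t - v t‖ := by
      rw [integral_add hi2 hi3, integral_const_mul, integral_const_mul]
    have h5 : ∫ _t in Set.Ioc (0:ℝ) T, (1:ℝ) = T := by
      rw [setIntegral_const, smul_eq_mul, mul_one, measureReal_def, Real.volume_Ioc, sub_zero,
        ENNReal.toReal_ofReal hT]
    have h6 : ∫ t in Set.Ioc (0:ℝ) T, ‖vc t‖ ≤ F + η := by
      have h7 : ∫ t in Set.Ioc (0:ℝ) T, ‖vc t‖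
          ≤ ∫ t in Set.Ioc (0:ℝ) T, (‖v t‖ + ‖vc t - v t‖) := by
        refine setIntegral_mono_on hvcint.integrableOn.norm hi4
          measurableSet_Ioc ?_
        intro t _ht
        have h8 : v t + (vc t - v t) = vc t := by abel
        calc ‖vc t‖ = ‖v t + (vc t - v t)‖ := by rw [h8]
          _ ≤ ‖v t‖ + ‖vc t - v t‖ := norm_add_le _ _
      rw [integral_add hv.norm hvcv.norm] at h7
      linarith
    have h4 : ∫ t in Set.Ioc (0:ℝ) T, (1 + ‖vc t‖) ≤ T + (F + η) := by
      rw [integral_add hconst hvcint.integrableOn.norm, h5]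
      linarith
    calc |∫ t in Set.Ioc (0:ℝ) T, (Dc t - D t)| ≤ _ := h1
      _ ≤ _ := h2
      _ = _ := h3
      _ ≤ ε' * (T + (F + η)) + M0 * η :=
          add_le_add (mul_le_mul_of_nonneg_left h4 hε'.le)
            (mul_le_mul_of_nonneg_left hclose hM0)
      _ ≤ ε' * (T + F + 1) + M0 * η := by nlinarith
  have hFTC' : ∫ t in Set.Ioc (0:ℝ) T, Dc t = g (T, zc T) - g (0, w 0) := by
    rw [← intervalIntegral.integral_of_le hT, hFTC, hzc0]
  have hXeq : X = (g (T, w T) - g (T, zc T))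
      + ((∫ t in Set.Ioc (0:ℝ) T, Dc t) - ∫ t in Set.Ioc (0:ℝ) T, D t) := by
    rw [hXdef, hFTC']; ring
  rw [hXeq]
  have hA1 : |g (T, w T) - g (T, zc T)| ≤ M0 * η := by
    simpa [Real.norm_eq_abs] using hend
  have hA2 : |(∫ t in Set.Ioc (0:ℝ) T, Dc t) - ∫ t in Set.Ioc (0:ℝ) T, D t|
      ≤ ε' * (T + F + 1) + M0 * η := by rw [hsub2]; exact hIbound
  have hη2 : 2 * M0 * η ≤ ε / 2 := by
    have hstep : 2*M0*η ≤ 2*M0*(ε/(2*(3*M0+1))) :=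
      mul_le_mul_of_nonneg_left hηε (by linarith : (0:ℝ) ≤ 2 * M0)
    have h9 : 2*M0*(ε/(2*(3*M0+1))) ≤ ε/2 := aux_frac M0 ε hM0 hε
    linarith
  have hε'2 : ε' * (T + F + 1) = ε / 2 := aux_half T F ε hTF
  refine le_trans (abs_add_le _ _) ?_
  linarith

set_option maxHeartbeats 1000000 in
lemma master
    (T : ℝ) (hT0 : 0 ≤ T) {m N : ℕ}
    (U : Set (Fin m → ℝ)) (hU : IsCompact U)
    (lam : ℕ → ℝ) (b : ℕ → (Fin m → ℝ) →ₗ[ℝ] ℝ)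
    (Z ZT : ℕ → Set ℝ)
    (hZ : ∀ k, ∃ a c : ℝ, a ≤ c ∧ Z k = Set.Icc a c)
    (hZT : ∀ k, ∃ a c : ℝ, a ≤ c ∧ ZT k = Set.Icc a c)
    (z0 : ℕ → ℝ) (h : ℝ → (Fin m → ℝ) → ℝ)
    (hh : ContinuousOn (fun p : ℝ × (Fin m → ℝ) => h p.1 p.2) (Set.Icc 0 T ×ˢ U))
    (u : ℝ → Fin m → ℝ) (hu : Measurable u)
    (huU : ∀ t ∈ Set.Icc (0:ℝ) T, u t ∈ U)
    (z : ℝ → Fin N → ℝ)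
    (hz0 : ∀ k : Fin N, z 0 k = z0 (k.1 + 1))
    (hint : ∀ k : Fin N,
      IntervalIntegrable (fun s => lam (k.1 + 1) * z s k + b (k.1 + 1) (u s)) volume 0 T)
    (hode : ∀ k : Fin N, ∀ t ∈ Set.Icc (0:ℝ) T,
      z t k = z0 (k.1 + 1) + ∫ s in (0:ℝ)..t, (lam (k.1 + 1) * z s k + b (k.1 + 1) (u s)))
    (hzZ : ∀ k : Fin N, ∀ t ∈ Set.Icc (0:ℝ) T, z t k ∈ Z (k.1 + 1))
    (hzT : ∀ k : Fin N, z T k ∈ ZT (k.1 + 1)) :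
    LPFeasible T U lam b Z ZT z0
        (Measure.map (fun t => (t, z t, u t)) (volume.restrict (Set.Icc (0:ℝ) T)))
        (Measure.dirac (z T)) ∧
    (∫ p : ℝ × (Fin N → ℝ) × (Fin m → ℝ), h p.1 p.2.2
        ∂(Measure.map (fun t => (t, z t, u t)) (volume.restrict (Set.Icc (0:ℝ) T))))
      = ∫ t in (0:ℝ)..T, h t (u t) := by
  have huIcc : Set.uIcc (0:ℝ) T = Set.Icc 0 T := Set.uIcc_of_le hT0
  set μ0 := volume.restrict (Set.Icc (0:ℝ) T) with hμ0
  set φ : ℝ → ℝ × (Fin N → ℝ) × (Fin m → ℝ) := fun t => (t, z t, u t) with hφdef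
  -- clamp
  set c : ℝ → ℝ := fun t => max 0 (min t T) with hcdef
  have hccont : Continuous c := continuous_const.max (continuous_id.min continuous_const)
  have hcmem : ∀ t, c t ∈ Set.Icc (0:ℝ) T :=
    fun t => ⟨le_max_left _ _, max_le hT0 (min_le_right _ _)⟩
  have hceq : ∀ t ∈ Set.Icc (0:ℝ) T, c t = t := by
    intro t ht
    simp only [hcdef]
    rw [min_eq_left ht.2, max_eq_right ht.1]
  -- trajectory continuity
  have hzcont : ContinuousOn z (Set.Icc 0 T) := by
    rw [continuousOn_pi]
    intro k
    have h1 : IntegrableOn (fun s => lam (k.1 + 1) * z s k + b (k.1 + 1) (u s))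
        (Set.uIcc 0 T) volume := by
      rw [huIcc, integrableOn_Icc_iff_integrableOn_Ioc]
      exact (hint k).1
    have h2 : ContinuousOn
        (fun t => z0 (k.1+1) + ∫ s in (0:ℝ)..t, (lam (k.1 + 1) * z s k + b (k.1 + 1) (u s)))
        (Set.Icc 0 T) := by
      refine continuousOn_const.add ?_
      simpa [huIcc] using intervalIntegral.continuousOn_primitive_interval h1
    exact h2.congr fun t ht => hode k t ht
  set w : ℝ → Fin N → ℝ := fun t => z (c t) with hwdef
  have hwz : ∀ t ∈ Set.Icc (0:ℝ) T, w t = z t := by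
    intro t ht; simp only [hwdef]; rw [hceq t ht]
  have hwcont : Continuous w := hzcont.comp_continuous hccont hcmem
  -- vector field
  set v : ℝ → Fin N → ℝ := fun s k => lam (k.1 + 1) * z s k + b (k.1 + 1) (u s) with hvdef
  have hvI : IntegrableOn v (Set.Ioc 0 T) volume := by
    have h1 : IntegrableOn (fun s => ∑ k : Fin N,
        (lam (k.1 + 1) * z s k + b (k.1 + 1) (u s)) • (Pi.single k 1 : Fin N → ℝ))
        (Set.Ioc 0 T) volume :=
      integrable_finset_sum _ fun k _ => ((hint k).1.smul_const _)
    have h2 : v = fun s => ∑ k : Fin N,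
        (lam (k.1 + 1) * z s k + b (k.1 + 1) (u s)) • (Pi.single k 1 : Fin N → ℝ) := by
      funext s
      exact pi_sum_single (v s)
    rw [h2]
    exact h1
  have hw0 : w 0 = z 0 := hwz 0 ⟨le_refl 0, hT0⟩
  have hw : ∀ t ∈ Set.Icc (0:ℝ) T, w t = w 0 + ∫ s in (0:ℝ)..t, v s := by
    intro t ht
    rw [hwz t ht, hw0]
    funext k
    have hproj : (∫ s in (0:ℝ)..t, v s) k = ∫ s in (0:ℝ)..t, v s k := by
      rw [intervalIntegral.integral_of_le ht.1, intervalIntegral.integral_of_le ht.1]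
      exact ((ContinuousLinearMap.proj (R := ℝ) (φ := fun _ : Fin N => ℝ) k).integral_comp_comm
        (hvI.mono_set (Set.Ioc_subset_Ioc_right ht.2))).symm
    show z t k = z 0 k + (∫ s in (0:ℝ)..t, v s) k
    rw [hproj, hz0 k]
    exact hode k t ht
  -- measurability of φ
  have hψm : Measurable (fun t => (t, w t, u t)) :=
    measurable_id.prodMk (hwcont.measurable.prodMk hu)
  have hφae : AEMeasurable φ μ0 := by
    refine hψm.aemeasurable.congr ?_
    rw [hμ0, Filter.EventuallyEq, ae_restrict_iff' measurableSet_Icc]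
    exact Filter.Eventually.of_forall fun t ht => by
      simp only [hφdef]; rw [hwz t ht]
  set μ := Measure.map φ μ0 with hμdef
  have hμ0fin : IsFiniteMeasure μ0 := by
    constructor
    rw [hμ0, Measure.restrict_apply_univ]
    exact measure_Icc_lt_top
  have hμfin : IsFiniteMeasure μ := by
    constructor
    rw [hμdef, Measure.map_apply_of_aemeasurable hφae MeasurableSet.univ, Set.preimage_univ,
      hμ0, Measure.restrict_apply_univ]
    exact measure_Icc_lt_top
  -- support conditions
  have hZclosed : ∀ k : ℕ, IsClosed (Z k) := by
    intro k; obtain ⟨a, cc, _, hzeq⟩ := hZ k; rw [hzeq]; exact isClosed_Icc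
  have hZTclosed : ∀ k : ℕ, IsClosed (ZT k) := by
    intro k; obtain ⟨a, cc, _, hzeq⟩ := hZT k; rw [hzeq]; exact isClosed_Icc
  have hbadm : MeasurableSet {p : ℝ × (Fin N → ℝ) × (Fin m → ℝ) |
      ¬ (p.1 ∈ Set.Icc (0:ℝ) T ∧ (∀ k : Fin N, p.2.1 k ∈ Z (k.1 + 1)) ∧ p.2.2 ∈ U)} := by
    have h1 : MeasurableSet {p : ℝ × (Fin N → ℝ) × (Fin m → ℝ) | p.1 ∈ Set.Icc (0:ℝ) T} :=
      measurable_fst measurableSet_Icc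
    have h2 : MeasurableSet {p : ℝ × (Fin N → ℝ) × (Fin m → ℝ) |
        ∀ k : Fin N, p.2.1 k ∈ Z (k.1 + 1)} := by
      have hforall : {p : ℝ × (Fin N → ℝ) × (Fin m → ℝ) | ∀ k : Fin N, p.2.1 k ∈ Z (k.1 + 1)}
          = ⋂ k : Fin N, {p : ℝ × (Fin N → ℝ) × (Fin m → ℝ) | p.2.1 k ∈ Z (k.1 + 1)} := by
        ext p; simp [Set.mem_iInter]
      rw [hforall]
      exact MeasurableSet.iInter fun k =>
        ((measurable_pi_apply k).comp (measurable_fst.comp measurable_snd))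
          ((hZclosed (k.1+1)).measurableSet)
    have h3 : MeasurableSet {p : ℝ × (Fin N → ℝ) × (Fin m → ℝ) | p.2.2 ∈ U} :=
      (measurable_snd.comp measurable_snd) (hU.isClosed.measurableSet)
    exact (h1.inter (h2.inter h3)).compl
  have hbadTm : MeasurableSet {y : Fin N → ℝ | ¬ ∀ k : Fin N, y k ∈ ZT (k.1 + 1)} := by
    have hforall : {y : Fin N → ℝ | ∀ k : Fin N, y k ∈ ZT (k.1 + 1)}
        = ⋂ k : Fin N, {y : Fin N → ℝ | y k ∈ ZT (k.1 + 1)} := by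
      ext y; simp [Set.mem_iInter]
    have h2 : MeasurableSet {y : Fin N → ℝ | ∀ k : Fin N, y k ∈ ZT (k.1 + 1)} := by
      rw [hforall]
      exact MeasurableSet.iInter fun k =>
        (measurable_pi_apply k) ((hZTclosed (k.1+1)).measurableSet)
    exact h2.compl
  have hsupp : μ {p | ¬ (p.1 ∈ Set.Icc (0:ℝ) T ∧ (∀ k : Fin N, p.2.1 k ∈ Z (k.1 + 1))
      ∧ p.2.2 ∈ U)} = 0 := by
    rw [hμdef, Measure.map_apply_of_aemeasurable hφae hbadm]
    refine measure_mono_null (t := (Set.Icc (0:ℝ) T)ᶜ) ?_ ?_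
    · intro t ht htIcc
      exact ht ⟨htIcc, fun k => hzZ k t htIcc, huU t htIcc⟩
    · rw [hμ0, Measure.restrict_apply measurableSet_Icc.compl, Set.compl_inter_self,
        measure_empty]
  have hsuppT : Measure.dirac (z T) {y : Fin N → ℝ | ¬ ∀ k : Fin N, y k ∈ ZT (k.1 + 1)} = 0 := by
    rw [Measure.dirac_apply' _ hbadTm]
    have : z T ∉ {y : Fin N → ℝ | ¬ ∀ k : Fin N, y k ∈ ZT (k.1 + 1)} := by
      intro hcon; exact hcon fun k => hzT k
    rw [Set.indicator_of_notMem this]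
  -- Liouville
  have hTIcc : T ∈ Set.Icc (0:ℝ) T := ⟨hT0, le_refl T⟩
  have h0Icc : (0:ℝ) ∈ Set.Icc (0:ℝ) T := ⟨le_refl 0, hT0⟩
  have hrestr : volume.restrict (Set.Ioc (0:ℝ) T) = μ0 := by
    rw [hμ0]
    exact Measure.restrict_congr_set Ioc_ae_eq_Icc
  have hliou : ∀ g : ℝ × (Fin N → ℝ) → ℝ, ContDiff ℝ 1 g →
      (∫ y, g (T, y) ∂(Measure.dirac (z T))) - g (0, fun k : Fin N => z0 (k.1 + 1))
        = ∫ p, Lop lam b g p ∂μ := by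
    intro g hg
    have hAc : Continuous (fderiv ℝ g) := hg.continuous_fderiv one_ne_zero
    have hLopcont : Continuous (Lop lam b g) := by
      have h12 : Continuous fun p : ℝ × (Fin N → ℝ) × (Fin m → ℝ) =>
          fderiv ℝ g (p.1, p.2.1) :=
        hAc.comp (continuous_fst.prodMk (continuous_fst.comp continuous_snd))
      refine Continuous.add ?_ ?_
      · exact isBoundedBilinearMap_apply.continuous.comp (h12.prodMk continuous_const)
      · refine continuous_finset_sum _ fun k _ => Continuous.mul ?_ ?_
        · refine Continuous.add ?_ ?_
          · exact continuous_const.mul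
              ((continuous_apply k).comp (continuous_fst.comp continuous_snd))
          · exact ((b (k.1+1)).continuous_of_finiteDimensional).comp
              (continuous_snd.comp continuous_snd)
        · exact isBoundedBilinearMap_apply.continuous.comp (h12.prodMk continuous_const)
    have hmap : ∫ p, Lop lam b g p ∂μ = ∫ t in Set.Icc (0:ℝ) T, Lop lam b g (φ t) := by
      rw [hμdef, integral_map hφae hLopcont.aestronglyMeasurable]
    have hptwise : ∀ t ∈ Set.Icc (0:ℝ) T,
        Lop lam b g (φ t) = fderiv ℝ g (t, w t) (1, v t) := by
      intro t ht
      have h1 : Lop lam b g (φ t) = fderiv ℝ g (t, z t) (1, v t) := by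
        rw [lin_decomp (fderiv ℝ g (t, z t)) (v t)]
        rfl
      rw [h1, hwz t ht]
    have hIcc : ∫ t in Set.Icc (0:ℝ) T, Lop lam b g (φ t)
        = ∫ t in (0:ℝ)..T, fderiv ℝ g (t, w t) (1, v t) := by
      rw [setIntegral_congr_fun measurableSet_Icc hptwise,
        intervalIntegral.integral_of_le hT0, hrestr]
    have hdirac : (∫ y, g (T, y) ∂(Measure.dirac (z T))) = g (T, z T) := by
      exact integral_dirac _ _
    have hz0v : (fun k : Fin N => z0 (k.1 + 1)) = w 0 := by
      funext k; rw [hw0, hz0 k]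
    rw [hmap, hIcc, hdirac, hz0v, ← ftc_key hT0 v hvI w hw g hg, hwz T hTIcc]
  -- cost equality
  have hcost : (∫ p : ℝ × (Fin N → ℝ) × (Fin m → ℝ), h p.1 p.2.2 ∂μ)
      = ∫ t in (0:ℝ)..T, h t (u t) := by
    set C : Set (ℝ × (Fin m → ℝ)) := Set.Icc (0:ℝ) T ×ˢ U with hCdef
    have hCclosed : IsClosed C := isClosed_Icc.prod hU.isClosed
    obtain ⟨H, hH⟩ := ContinuousMap.exists_restrict_eq hCclosed
      ⟨C.restrict (fun p : ℝ × (Fin m → ℝ) => h p.1 p.2), hh.restrict⟩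
    have hHeq : ∀ p ∈ C, H p = h p.1 p.2 := by
      intro p hp
      exact DFunLike.congr_fun hH (⟨p, hp⟩ : C)
    have h1 : (∫ p : ℝ × (Fin N → ℝ) × (Fin m → ℝ), h p.1 p.2.2 ∂μ)
        = ∫ p : ℝ × (Fin N → ℝ) × (Fin m → ℝ), H (p.1, p.2.2) ∂μ := by
      refine integral_congr_ae ?_
      have hae : ∀ᵐ p : ℝ × (Fin N → ℝ) × (Fin m → ℝ) ∂μ,
          p.1 ∈ Set.Icc (0:ℝ) T ∧ (∀ k : Fin N, p.2.1 k ∈ Z (k.1 + 1)) ∧ p.2.2 ∈ U := by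
        rw [MeasureTheory.ae_iff]
        exact hsupp
      filter_upwards [hae] with p hp
      rw [hHeq (p.1, p.2.2) ⟨hp.1, hp.2.2⟩]
    have h2 : (∫ p : ℝ × (Fin N → ℝ) × (Fin m → ℝ), H (p.1, p.2.2) ∂μ)
        = ∫ t in Set.Icc (0:ℝ) T, H (t, u t) := by
      rw [hμdef, integral_map hφae]
      exact (H.continuous.comp
        (continuous_fst.prodMk (continuous_snd.comp continuous_snd))).aestronglyMeasurable
    have h3 : ∫ t in Set.Icc (0:ℝ) T, H (t, u t) = ∫ t in Set.Icc (0:ℝ) T, h t (u t) := by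
      refine setIntegral_congr_fun measurableSet_Icc fun t ht => ?_
      exact hHeq (t, u t) ⟨ht, huU t ht⟩
    rw [h1, h2, h3, intervalIntegral.integral_of_le hT0, hrestr]
  exact ⟨⟨hμfin, inferInstance, hsupp, hsuppT, hliou⟩, hcost⟩

/-- the occupation measure `μ_N` of an `N`-admissible control `u` with
trajectory `z` (the pushforward of Lebesgue measure on `[0,T]` by `t ↦ (t,z(t),u(t))`)
and the terminal measure `μ_N^T = δ_{z(T)}` are feasible for the LP `P_N`; the cost of
`μ_N` equals the cost of `u`; and consequently `P_N ≤ J_N(0,T,z⁰)`. -/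
theorem statement8
    (T : ℝ) (hT : 0 < T) (m N : ℕ) (hm : 0 < m) (hN : 0 < N)
    (U : Set (Fin m → ℝ)) (hU : IsCompact U)
    (lam : ℕ → ℝ) (b : ℕ → (Fin m → ℝ) →ₗ[ℝ] ℝ)
    (Z ZT : ℕ → Set ℝ)
    (hZ : ∀ k, ∃ a c : ℝ, a ≤ c ∧ Z k = Set.Icc a c)
    (hZT : ∀ k, ∃ a c : ℝ, a ≤ c ∧ ZT k = Set.Icc a c)
    (z0 : ℕ → ℝ) (h : ℝ → (Fin m → ℝ) → ℝ)
    (hh : ContinuousOn (fun p : ℝ × (Fin m → ℝ) => h p.1 p.2) (Set.Icc 0 T ×ˢ U))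
    -- u is an N-admissible control with associated trajectory z
    (u : ℝ → Fin m → ℝ) (hu : Measurable u)
    (huU : ∀ t ∈ Set.Icc (0:ℝ) T, u t ∈ U)
    (z : ℝ → Fin N → ℝ)
    (hz0 : ∀ k : Fin N, z 0 k = z0 (k.1 + 1))
    (hint : ∀ k : Fin N,
      IntervalIntegrable (fun s => lam (k.1 + 1) * z s k + b (k.1 + 1) (u s)) volume 0 T)
    (hode : ∀ k : Fin N, ∀ t ∈ Set.Icc (0:ℝ) T,
      z t k = z0 (k.1 + 1) + ∫ s in (0:ℝ)..t, (lam (k.1 + 1) * z s k + b (k.1 + 1) (u s)))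
    (hzZ : ∀ k : Fin N, ∀ t ∈ Set.Icc (0:ℝ) T, z t k ∈ Z (k.1 + 1))
    (hzT : ∀ k : Fin N, z T k ∈ ZT (k.1 + 1)) :
    LPFeasible T U lam b Z ZT z0
        (Measure.map (fun t => (t, z t, u t)) (volume.restrict (Set.Icc (0:ℝ) T)))
        (Measure.dirac (z T)) ∧
    (∫ p : ℝ × (Fin N → ℝ) × (Fin m → ℝ), h p.1 p.2.2
        ∂(Measure.map (fun t => (t, z t, u t)) (volume.restrict (Set.Icc (0:ℝ) T))))
      = ∫ t in (0:ℝ)..T, h t (u t) ∧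
    sInf {c : ℝ | ∃ (μ : Measure (ℝ × (Fin N → ℝ) × (Fin m → ℝ)))
          (μT : Measure (Fin N → ℝ)),
        LPFeasible T U lam b Z ZT z0 μ μT ∧ c = ∫ p, h p.1 p.2.2 ∂μ}
      ≤ sInf {c : ℝ | ∃ u', IsAdmissible T U lam b Z ZT z0 N u' ∧
          c = ∫ t in (0:ℝ)..T, h t (u' t)} := by
  have hmain := master T hT.le U hU lam b Z ZT hZ hZT z0 h hh u hu huU z hz0 hint hode hzZ hzT
  refine ⟨hmain.1, hmain.2, ?_⟩
  set LPset : Set ℝ := {c : ℝ | ∃ (μ : Measure (ℝ × (Fin N → ℝ) × (Fin m → ℝ)))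
      (μT : Measure (Fin N → ℝ)),
      LPFeasible T U lam b Z ZT z0 μ μT ∧ c = ∫ p, h p.1 p.2.2 ∂μ} with hLPdef
  set Jset : Set ℝ := {c : ℝ | ∃ u', IsAdmissible T U lam b Z ZT z0 N u' ∧
      c = ∫ t in (0:ℝ)..T, h t (u' t)} with hJdef
  -- J ⊆ LP
  have hsubset : Jset ⊆ LPset := by
    rintro c ⟨u', ⟨hu'm, hu'U, hu'z⟩, hceq⟩
    have hz'ex : ∀ k : Fin N, ∃ zk : ℝ → ℝ, zk 0 = z0 (k.1 + 1) ∧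
        IntervalIntegrable (fun s => lam (k.1+1) * zk s + b (k.1+1) (u' s)) volume 0 T ∧
        (∀ t ∈ Set.Icc (0:ℝ) T,
          zk t = z0 (k.1+1) + ∫ s in (0:ℝ)..t, (lam (k.1+1) * zk s + b (k.1+1) (u' s))) ∧
        (∀ t ∈ Set.Icc (0:ℝ) T, zk t ∈ Z (k.1+1)) ∧ zk T ∈ ZT (k.1+1) := by
      intro k
      exact hu'z (k.1 + 1) (by omega) (by omega)
    choose zk hzk0 hzkint hzkode hzkZ hzkT using hz'ex
    have hm' := master T hT.le U hU lam b Z ZT hZ hZT z0 h hh u' hu'm hu'U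
      (fun t k => zk k t) (fun k => hzk0 k) (fun k => hzkint k)
      (fun k t ht => hzkode k t ht) (fun k t ht => hzkZ k t ht) (fun k => hzkT k)
    exact ⟨_, _, hm'.1, hceq.trans hm'.2.symm⟩
  -- J nonempty
  have hJne : Jset.Nonempty := by
    refine ⟨∫ t in (0:ℝ)..T, h t (u t), u, ⟨hu, huU, ?_⟩, rfl⟩
    intro k h1k hkN
    set K : Fin N := ⟨k - 1, by omega⟩ with hKdef
    have hK1 : K.1 + 1 = k := by simp [hKdef]; omega
    refine ⟨fun t => z t K, ?_, ?_, ?_, ?_, ?_⟩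
    · have := hz0 K; rw [hK1] at this; exact this
    · have := hint K; rw [hK1] at this; exact this
    · have := hode K; rw [hK1] at this; exact this
    · have := hzZ K; rw [hK1] at this; exact this
    · have := hzT K; rw [hK1] at this; exact this
  -- LP bounded below
  have hbdd : BddBelow LPset := by
    obtain ⟨M, hM⟩ := (isCompact_Icc.prod hU).exists_bound_of_continuousOn hh
    set M0 := max M 0 with hM0def
    have hM0 : 0 ≤ M0 := le_max_right _ _
    refine ⟨-(M0 * T), fun c hc => ?_⟩
    obtain ⟨μ, μT, ⟨hfin, hfinT, hsupp, _, hliou⟩, hceq⟩ := hc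
    haveI := hfin
    haveI := hfinT
    -- total mass of μT is 1
    have hLop1 : Lop (N := N) (m := m) lam b (fun _ => (1:ℝ)) = fun _ => 0 := by
      funext p
      simp [Lop, fderiv_const]
    have hg1 := hliou (fun _ => (1:ℝ)) contDiff_const
    rw [hLop1] at hg1
    simp only [integral_const, integral_zero, smul_eq_mul, mul_one] at hg1
    have hmassT : (μT Set.univ).toReal = 1 := by simp only [measureReal_def] at hg1; linarith
    -- total mass of μ is T
    have hfd : ∀ x : ℝ × (Fin N → ℝ), fderiv ℝ (fun p : ℝ × (Fin N → ℝ) => p.1) x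
        = ContinuousLinearMap.fst ℝ ℝ (Fin N → ℝ) := fun x => fderiv_fst
    have hLopf : Lop (N := N) (m := m) lam b (fun p => p.1) = fun _ => 1 := by
      funext p
      simp [Lop, hfd]
    have hgt := hliou (fun p => p.1) contDiff_fst
    rw [hLopf] at hgt
    simp only [integral_const, smul_eq_mul, hmassT, one_mul] at hgt
    have hmass : (μ Set.univ).toReal = T := by simp only [measureReal_def, hmassT] at hgt; linarith
    -- lower bound
    have hae : ∀ᵐ p : ℝ × (Fin N → ℝ) × (Fin m → ℝ) ∂μ, -M0 ≤ h p.1 p.2.2 := by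
      have hae0 : ∀ᵐ p : ℝ × (Fin N → ℝ) × (Fin m → ℝ) ∂μ,
          p.1 ∈ Set.Icc (0:ℝ) T ∧ (∀ k : Fin N, p.2.1 k ∈ Z (k.1 + 1)) ∧ p.2.2 ∈ U := by
        rw [MeasureTheory.ae_iff]; exact hsupp
      filter_upwards [hae0] with p hp
      have := hM (p.1, p.2.2) ⟨hp.1, hp.2.2⟩
      rw [Real.norm_eq_abs] at this
      have h2 : |h p.1 p.2.2| ≤ M0 := this.trans (le_max_left _ _)
      linarith [abs_le.1 h2 |>.1]
    rw [hceq]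
    by_cases hInt : Integrable (fun p : ℝ × (Fin N → ℝ) × (Fin m → ℝ) => h p.1 p.2.2) μ
    · have h1 : ∫ _p : ℝ × (Fin N → ℝ) × (Fin m → ℝ), -M0 ∂μ
          ≤ ∫ p : ℝ × (Fin N → ℝ) × (Fin m → ℝ), h p.1 p.2.2 ∂μ :=
        integral_mono_ae (integrable_const _) hInt hae
      rw [integral_const, smul_eq_mul, measureReal_def, hmass] at h1
      linarith
    · rw [integral_undef hInt]
      nlinarith
  exact csInf_le_csInf hbdd hJne hsubset


end
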